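/- Let E be a finite-dimensional real inner product space, X ⊆ E a nonempty convex set, N : E → ℝ a norm on E (satisfying N(x) ≥ 0, N(x) = 0 ↔ x = 0, N(cx) = |c|N(x), N(x+y) ≤ N(x)+N(y)), and let N*(y) = sup{⟨y, x⟩ : x ∈ E, N(x) ≤ 1} be its dual norm. Let ω : E → ℝ be differentiable with gradient ∇ω and strongly convex on X with modulus η > 0 with respect to N, i.e., ⟨∇ω(x') − ∇ω(x), x' − x⟩ ≥ η·N(x' − x)² for all x, x' ∈ X. Define the Bregman distance V(x, u) = ω(u) − ω(x) − ⟨∇ω(x), u − x⟩. Fix x ∈ X and y ∈ E, and suppose v ∈ X satisfies ⟨y, v − x⟩ + V(x, v) ≤ ⟨y, u − x⟩ + V(x, u) for all u ∈ X (i.e., v is a prox-mapping point P_x(y)). Then for every u ∈ X: V(v, u) ≤ V(x, u) + ⟨y, u − x⟩ + N*(y)²/(2η). -/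

import Mathlib

open scoped RealInnerProductSpace

private def NormSyn (E : Type*) : Type _ := E

private lemma exists_const_norm_le
    {E : Type*} [NormedAddCommGroup E] [NormedSpace ℝ E] [FiniteDimensional ℝ E]
    (N : E → ℝ)
    (hN_eq_zero : ∀ x, N x = 0 ↔ x = 0)
    (hN_smul : ∀ (c : ℝ) (x : E), N (c • x) = |c| * N x)
    (hN_add : ∀ x y, N (x + y) ≤ N x + N y) :
    ∃ C : ℝ, 0 < C ∧ ∀ z : E, ‖z‖ ≤ C * N z := by
  letI : AddCommGroup (NormSyn E) := inferInstanceAs (AddCommGroup E)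
  letI : Module ℝ (NormSyn E) := inferInstanceAs (Module ℝ E)
  letI : NormedAddCommGroup (NormSyn E) := AddGroupNorm.toNormedAddCommGroup
    { toFun := fun z => N z
      map_zero' := (hN_eq_zero 0).mpr rfl
      add_le' := hN_add
      neg' := fun z => by
        have h := hN_smul (-1) (show E from z)
        have h2 : ((-1:ℝ) • (show E from z)) = -(show E from z) := neg_one_smul ℝ _
        rw [h2, abs_neg, abs_one, one_mul] at h
        exact h
      eq_zero_of_map_eq_zero' := fun z hz => (hN_eq_zero z).mp hz }
  letI : NormedSpace ℝ (NormSyn E) :=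
    { toModule := inferInstanceAs (Module ℝ E)
      norm_smul_le := fun c z => le_of_eq (hN_smul c z) }
  haveI : FiniteDimensional ℝ (NormSyn E) := by
    have h : FiniteDimensional ℝ E := inferInstance
    exact h
  let f : NormSyn E →ₗ[ℝ] E :=
    { toFun := fun z => z, map_add' := fun a b => rfl, map_smul' := fun c a => rfl }
  let g : NormSyn E →L[ℝ] E := LinearMap.toContinuousLinearMap f
  refine ⟨‖g‖ + 1, by positivity, fun z => ?_⟩
  have h1 : ‖z‖ ≤ ‖g‖ * N z := g.le_opNorm z
  have h3 : (0:ℝ) ≤ N z := by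
    have h := norm_nonneg (show NormSyn E from z)
    exact h
  nlinarith [norm_nonneg g]

/-- Prox-mapping inequality for a mirror-descent step (Lemma 2.1 of Nemirovski et al.):
if `v = P_x(y)` is the prox point of `y` at `x ∈ X` for a distance generating function `ω`
that is `η`-strongly convex on `X` with respect to a norm `N`, then for every `u ∈ X`,
`V(v, u) ≤ V(x, u) + ⟨y, u - x⟩ + N*(y)² / (2η)`, where `V` is the Bregman distance and
`N*` is the dual norm. -/
theorem prox_mapping_bregman_inequality
    {E : Type*} [NormedAddCommGroup E] [InnerProductSpace ℝ E] [FiniteDimensional ℝ E]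
    (X : Set E) (hXne : X.Nonempty) (hXconv : Convex ℝ X)
    (N : E → ℝ)
    (hN_nonneg : ∀ x, 0 ≤ N x)
    (hN_eq_zero : ∀ x, N x = 0 ↔ x = 0)
    (hN_smul : ∀ (c : ℝ) (x : E), N (c • x) = |c| * N x)
    (hN_add : ∀ x y, N (x + y) ≤ N x + N y)
    (Nstar : E → ℝ)
    (hNstar : ∀ y, Nstar y = sSup ((fun x => ⟪y, x⟫) '' {x : E | N x ≤ 1}))
    (ω : E → ℝ) (hω : Differentiable ℝ ω)
    (η : ℝ) (hη : 0 < η)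
    (hstrong : ∀ x ∈ X, ∀ x' ∈ X,
      η * N (x' - x) ^ 2 ≤ ⟪gradient ω x' - gradient ω x, x' - x⟫)
    (V : E → E → ℝ)
    (hV : ∀ x u, V x u = ω u - ω x - ⟪gradient ω x, u - x⟫)
    (x : E) (hx : x ∈ X) (y : E)
    (v : E) (hv : v ∈ X)
    (hprox : ∀ u ∈ X, ⟪y, v - x⟫ + V x v ≤ ⟪y, u - x⟫ + V x u) :
    ∀ u ∈ X, V v u ≤ V x u + ⟪y, u - x⟫ + Nstar y ^ 2 / (2 * η) := by
  intro u hu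
  set g : E → E := gradient ω with hg
  -- derivatives along lines
  have line : ∀ (a b : E) (t : ℝ),
      HasDerivAt (fun s : ℝ => ω (a + s • b)) ⟪g (a + t • b), b⟫ t := by
    intro a b t
    have hc : HasDerivAt (fun s : ℝ => a + s • b) b t := by
      simpa using ((hasDerivAt_id t).smul_const b).const_add a
    have hf : HasFDerivAt ω ((InnerProductSpace.toDual ℝ E) (g (a + t • b))) (a + t • b) :=
      ((hω (a + t • b)).hasGradientAt).hasFDerivAt
    exact (hf.comp_hasDerivAt t hc).congr_deriv (by simp [InnerProductSpace.toDual_apply_apply])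
  -- dual-norm inequality
  obtain ⟨C, hC, hCle⟩ := exists_const_norm_le N hN_eq_zero hN_smul hN_add
  have dualineq : ∀ z : E, ⟪y, z⟫ ≤ Nstar y * N z := by
    have hbdd : BddAbove ((fun x => ⟪y, x⟫) '' {x : E | N x ≤ 1}) := by
      refine ⟨‖y‖ * C, ?_⟩
      rintro a ⟨w, hw, rfl⟩
      show ⟪y, w⟫ ≤ ‖y‖ * C
      have h1 : ⟪y, w⟫ ≤ ‖y‖ * ‖w‖ := real_inner_le_norm y w
      have h2 : ‖w‖ ≤ C * N w := hCle w
      have h3 : N w ≤ 1 := hw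
      calc ⟪y, w⟫ ≤ ‖y‖ * ‖w‖ := h1
        _ ≤ ‖y‖ * (C * N w) := mul_le_mul_of_nonneg_left h2 (norm_nonneg y)
        _ ≤ ‖y‖ * (C * 1) := by
            have h4 : C * N w ≤ C * 1 := mul_le_mul_of_nonneg_left h3 hC.le
            exact mul_le_mul_of_nonneg_left h4 (norm_nonneg y)
        _ = ‖y‖ * C := by ring
    intro z
    by_cases hz : N z = 0
    · have hz0 : z = 0 := (hN_eq_zero z).mp hz
      rw [hz0] at hz ⊢
      simp [hz]
    · have hzpos : 0 < N z := lt_of_le_of_ne (hN_nonneg z) (Ne.symm hz)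
      have hmem : (N z)⁻¹ • z ∈ {x : E | N x ≤ 1} := by
        simp only [Set.mem_setOf_eq, hN_smul, abs_of_pos (inv_pos.mpr hzpos),
          inv_mul_cancel₀ hz, le_refl]
      have hle : ⟪y, (N z)⁻¹ • z⟫ ≤ Nstar y := by
        rw [hNstar]
        exact le_csSup hbdd ⟨_, hmem, rfl⟩
      rw [real_inner_smul_right] at hle
      calc ⟪y, z⟫ = N z * ((N z)⁻¹ * ⟪y, z⟫) := by field_simp
        _ ≤ N z * Nstar y := mul_le_mul_of_nonneg_left hle hzpos.le
        _ = Nstar y * N z := mul_comm _ _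
  -- strong-convexity lower bound on V x v
  have Vlb : η / 2 * N (v - x) ^ 2 ≤ V x v := by
    set d := v - x with hd
    set G : ℝ → ℝ := fun t => ω (x + t • d) - t * ⟪g x, d⟫ - η * N d ^ 2 * t ^ 2 / 2 with hG
    have hG' : ∀ t : ℝ,
        HasDerivAt G (⟪g (x + t • d), d⟫ - ⟪g x, d⟫ - η * N d ^ 2 * t) t := by
      intro t
      have h1 := line x d t
      have h2 : HasDerivAt (fun s : ℝ => s * ⟪g x, d⟫) ⟪g x, d⟫ t := by
        simpa using (hasDerivAt_id t).mul_const ⟪g x, d⟫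
      have h3 : HasDerivAt (fun s : ℝ => η * N d ^ 2 * s ^ 2 / 2) (η * N d ^ 2 * t) t := by
        have := ((hasDerivAt_pow 2 t).const_mul (η * N d ^ 2)).div_const 2
        refine this.congr_deriv ?_
        all_goals (push_cast; ring)
      rw [hG]
      exact (h1.sub h2).sub h3
    have hmono : MonotoneOn G (Set.Icc (0:ℝ) 1) := by
      apply monotoneOn_of_deriv_nonneg (convex_Icc 0 1)
      · exact fun t _ => (hG' t).differentiableAt.continuousAt.continuousWithinAt
      · exact fun t _ => (hG' t).differentiableAt.differentiableWithinAt
      · intro t ht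
        rw [interior_Icc] at ht
        rw [(hG' t).deriv]
        have hmem : x + t • d ∈ X := hXconv.add_smul_sub_mem hx hv ⟨ht.1.le, ht.2.le⟩
        have hs := hstrong x hx (x + t • d) hmem
        have he : x + t • d - x = t • d := by abel
        rw [he] at hs
        rw [hN_smul, abs_of_pos ht.1, real_inner_smul_right, inner_sub_left] at hs
        have ht0 : 0 < t := ht.1
        have hNd : 0 ≤ N d := hN_nonneg d
        nlinarith [hs]
    have h01 := hmono (Set.left_mem_Icc.mpr zero_le_one) (Set.right_mem_Icc.mpr zero_le_one)
      zero_le_one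
    have hG0 : G 0 = ω x := by simp [hG]
    have hG1 : G 1 = ω v - ⟪g x, d⟫ - η * N d ^ 2 / 2 := by
      have hv1 : x + d = v := by rw [hd]; abel
      simp [hG, hv1]
    rw [hG0, hG1] at h01
    rw [hV, ← hd]
    linarith
  -- first-order optimality at v
  have opt : 0 ≤ ⟪y, u - v⟫ + ⟪g v, u - v⟫ - ⟪g x, u - v⟫ := by
    set w := u - v with hw
    set h : ℝ → ℝ := fun t => ⟪y, v - x⟫ + t * ⟪y, w⟫ + (ω (v + t • w) - ω x)
        - (⟪g x, v - x⟫ + t * ⟪g x, w⟫) with hh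
    have hval : ∀ t : ℝ, h t = ⟪y, (v + t • w) - x⟫ + V x (v + t • w) := by
      intro t
      rw [hh, hV]
      have he : (v + t • w) - x = (v - x) + t • w := by abel
      rw [he, inner_add_right, inner_add_right, real_inner_smul_right, real_inner_smul_right]
      ring
    have hmin : ∀ t ∈ Set.Icc (0:ℝ) 1, h 0 ≤ h t := by
      intro t ht
      have hmem : v + t • w ∈ X := hXconv.add_smul_sub_mem hv hu ht
      have h0 : h 0 = ⟪y, v - x⟫ + V x v := by
        rw [hval]; simp
      rw [h0, hval]
      exact hprox _ hmem
    have hD : HasDerivAt h (⟪y, w⟫ + ⟪g v, w⟫ - ⟪g x, w⟫) 0 := by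
      have h1 : HasDerivAt (fun t : ℝ => ⟪y, v - x⟫ + t * ⟪y, w⟫) ⟪y, w⟫ 0 := by
        simpa using ((hasDerivAt_id (0:ℝ)).mul_const ⟪y, w⟫).const_add ⟪y, v - x⟫
      have h2 : HasDerivAt (fun t : ℝ => ω (v + t • w) - ω x) ⟪g v, w⟫ 0 := by
        have := (line v w 0).sub_const (ω x)
        simpa using this
      have h3 : HasDerivAt (fun t : ℝ => ⟪g x, v - x⟫ + t * ⟪g x, w⟫) ⟪g x, w⟫ 0 := by
        simpa using ((hasDerivAt_id (0:ℝ)).mul_const ⟪g x, w⟫).const_add ⟪g x, v - x⟫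
      rw [hh]
      exact (h1.add h2).sub h3
    have hslope : Filter.Tendsto (slope h 0) (nhdsWithin 0 (Set.Ioi 0))
        (nhds (⟪y, w⟫ + ⟪g v, w⟫ - ⟪g x, w⟫)) := by
      have ht := hasDerivAt_iff_tendsto_slope.mp hD
      exact ht.mono_left (nhdsWithin_mono _ fun t ht => Set.mem_compl_singleton_iff.mpr
        (ne_of_gt ht))
    refine ge_of_tendsto hslope ?_
    filter_upwards [Ioc_mem_nhdsGT_of_mem (Set.left_mem_Ico.mpr zero_lt_one)] with t ht
    rw [slope_def_field]
    have := hmin t ⟨ht.1.le, ht.2⟩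
    have ht0 : (0:ℝ) < t := ht.1
    apply div_nonneg <;> linarith
  -- three-point identity
  have e1 : ∀ a : E, ⟪a, u - x⟫ = ⟪a, u - v⟫ + ⟪a, v - x⟫ := fun a => by
    rw [← inner_add_right, sub_add_sub_cancel]
  have three : V v u = V x u - V x v - (⟪g v, u - v⟫ - ⟪g x, u - v⟫) := by
    rw [hV v u, hV x u, hV x v, e1 (g x)]
    ring
  -- put things together
  have e3 : ⟪y, u - v⟫ = ⟪y, u - x⟫ + ⟪y, x - v⟫ := by
    rw [← inner_add_right, sub_add_sub_cancel]
  have hNxv : N (x - v) = N (v - x) := by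
    have := hN_smul (-1) (v - x)
    simpa [neg_sub] using this
  have dual := dualineq (x - v)
  rw [hNxv] at dual
  set t := N (v - x) with htdef
  have quad : Nstar y * t - η / 2 * t ^ 2 ≤ Nstar y ^ 2 / (2 * η) := by
    rw [le_div_iff₀ (by positivity)]
    nlinarith [sq_nonneg (Nstar y - η * t)]
  linarith
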